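/- Suppose f: [-1,1] → ℝ has an absolutely convergent Chebyshev expansion with coefficients a_k, and let p_n^{II} be the degree-n interpolant at the Chebyshev points of the second kind x_j = cos(jπ/n), j = 0,…,n, with coefficients c_k (first and last halved in the expansion). Then c_k = a_k + Σ_{ℓ=1}^{∞} (a_{2ℓn - k} + a_{2ℓn + k}) for k = 0,1,…,n. -/

import Mathlib

open Real

section AliasingAux

open Finset

lemma sum_cos_full (n : ℕ) (hn : 1 ≤ n) (r : ℤ) :
    ∑ j ∈ Finset.range (2 * n), Real.cos (r * j * π / n) =
      if (2 * (n : ℤ)) ∣ r then (2 * n : ℝ) else 0 := by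
  have hn0 : (n : ℝ) ≠ 0 := Nat.cast_ne_zero.mpr (by omega)
  by_cases hd : (2 * (n : ℤ)) ∣ r
  · obtain ⟨t, ht⟩ := hd
    rw [if_pos ⟨t, ht⟩]
    have h1 : ∀ j ∈ Finset.range (2 * n), Real.cos (r * j * π / n) = 1 := by
      intro j _
      have harg : (r : ℝ) * j * π / n = ((t * j : ℤ) : ℝ) * (2 * π) := by
        have hr : (r : ℝ) = 2 * n * t := by exact_mod_cast congrArg (Int.cast : ℤ → ℝ) ht
        rw [hr]; push_cast; field_simp
      rw [harg, Real.cos_int_mul_two_pi]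
    rw [Finset.sum_congr rfl h1]
    simp
  · rw [if_neg hd]
    set x : ℝ := r * π / n with hx
    set z : ℂ := Complex.exp ((x : ℂ) * Complex.I) with hz
    have hz1 : z ≠ 1 := by
      intro h
      rw [hz, Complex.exp_eq_one_iff] at h
      obtain ⟨m, hm⟩ := h
      have hm2 : (x : ℂ) * Complex.I = ((m : ℂ) * (2 * (π : ℂ))) * Complex.I := by
        rw [hm]; ring
      have hm' : (x : ℂ) = m * (2 * π) := mul_right_cancel₀ Complex.I_ne_zero hm2
      have hmr : x = m * (2 * π) := by exact_mod_cast hm'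
      apply hd
      refine ⟨m, ?_⟩
      have hπ : (π : ℝ) ≠ 0 := Real.pi_ne_zero
      rw [hx] at hmr
      field_simp at hmr
      have : (r : ℝ) * π = (2 * n * m) * π := by rw [hmr]; ring
      have hr : (r : ℝ) = 2 * n * m := mul_right_cancel₀ hπ this
      exact_mod_cast hr
    have hz2n : z ^ (2 * n) = 1 := by
      rw [hz, ← Complex.exp_nat_mul]
      have hnC : (n : ℂ) ≠ 0 := by exact_mod_cast hn0
      rw [show ((2 * n : ℕ) : ℂ) * ((x : ℂ) * Complex.I) = (r : ℂ) * (2 * π * Complex.I) by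
        rw [hx]; push_cast; field_simp]
      exact Complex.exp_int_mul_two_pi_mul_I r
    have hterm : ∀ j : ℕ, Real.cos (r * j * π / n) = (z ^ j).re := by
      intro j
      rw [hz, ← Complex.exp_nat_mul]
      rw [show (j : ℂ) * ((x : ℂ) * Complex.I) = ((r * j * π / n : ℝ) : ℂ) * Complex.I by
        rw [hx]; push_cast; ring]
      rw [Complex.exp_ofReal_mul_I_re]
    calc ∑ j ∈ Finset.range (2 * n), Real.cos (r * j * π / n)
        = (∑ j ∈ Finset.range (2 * n), z ^ j).re := by
          rw [Complex.re_sum]; exact Finset.sum_congr rfl fun j _ => hterm j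
      _ = 0 := by rw [geom_sum_eq hz1, hz2n]; simp

lemma sum_cos_wt (n : ℕ) (hn : 1 ≤ n) (r : ℤ)
    (hfull : ∑ j ∈ Finset.range (2 * n), Real.cos (r * j * π / n) =
      if (2 * (n : ℤ)) ∣ r then (2 * n : ℝ) else 0) :
    ∑ j ∈ Finset.range (n + 1),
      (if j = 0 ∨ j = n then (1 : ℝ) / 2 else 1) * Real.cos (r * j * π / n) =
      if (2 * (n : ℤ)) ∣ r then (n : ℝ) else 0 := by
  have hn0 : (n : ℝ) ≠ 0 := Nat.cast_ne_zero.mpr (by omega)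
  set c : ℕ → ℝ := fun j => Real.cos (r * j * π / n) with hc
  -- reflection
  have hrefl : ∀ i : ℕ, i ≤ 2 * n → c (2 * n - i) = c i := by
    intro i hi
    have : (r : ℝ) * ((2 * n - i : ℕ) : ℝ) * π / n = (r : ℝ) * (2 * π) - r * i * π / n := by
      rw [Nat.cast_sub hi]; push_cast; field_simp
    rw [hc]; simp only [this]
    exact Real.cos_int_mul_two_pi_sub _ r
  -- the full sum equals twice the weighted sum
  have hsplit : ∑ j ∈ Finset.range (2 * n), c j =
      ∑ j ∈ Finset.range n, c j + ∑ j ∈ Finset.range n, c (n + j) := by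
    rw [two_mul, Finset.sum_range_add]
  have hsecond : ∑ j ∈ Finset.range n, c (n + j) = ∑ j ∈ Finset.range n, c (j + 1) := by
    rw [← Finset.sum_range_reflect (fun j => c (n + j)) n]
    apply Finset.sum_congr rfl
    intro j hj
    have hj' : j < n := Finset.mem_range.mp hj
    have h1 : n + (n - 1 - j) = 2 * n - (j + 1) := by omega
    rw [h1, hrefl (j + 1) (by omega)]
  have hsum1 : ∑ j ∈ Finset.range (n + 1), c j = ∑ j ∈ Finset.range n, c j + c n :=
    Finset.sum_range_succ c n
  have hsum2 : ∑ j ∈ Finset.range (n + 1), c j = c 0 + ∑ j ∈ Finset.range n, c (j + 1) := by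
    rw [Finset.sum_range_succ' c n]; ring
  -- weighted sum in terms of plain sum
  have hwt : ∑ j ∈ Finset.range (n + 1),
      (if j = 0 ∨ j = n then (1 : ℝ) / 2 else 1) * c j =
      ∑ j ∈ Finset.range (n + 1), c j - c 0 / 2 - c n / 2 := by
    have key : ∀ j ∈ Finset.range (n + 1),
        (if j = 0 ∨ j = n then (1 : ℝ) / 2 else 1) * c j =
        c j - (if j = 0 then c 0 / 2 else 0) - (if j = n then c n / 2 else 0) := by
      intro j _
      by_cases h0 : j = 0
      · subst h0
        have : (0 : ℕ) ≠ n := by omega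
        simp [this]; ring
      · by_cases hnn : j = n
        · subst hnn
          simp [h0]; ring
        · simp [h0, hnn]
    rw [Finset.sum_congr rfl key]
    rw [Finset.sum_sub_distrib, Finset.sum_sub_distrib]
    rw [Finset.sum_ite_eq' (Finset.range (n + 1)) 0 (fun _ => c 0 / 2)]
    rw [Finset.sum_ite_eq' (Finset.range (n + 1)) n (fun _ => c n / 2)]
    simp
  have hdouble : ∑ j ∈ Finset.range (2 * n), c j =
      2 * (∑ j ∈ Finset.range (n + 1),
        (if j = 0 ∨ j = n then (1 : ℝ) / 2 else 1) * c j) := by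
    rw [hwt, hsplit, hsecond]
    have e1 : ∑ j ∈ Finset.range n, c j = ∑ j ∈ Finset.range (n + 1), c j - c n := by
      rw [hsum1]; ring
    have e2 : ∑ j ∈ Finset.range n, c (j + 1) = ∑ j ∈ Finset.range (n + 1), c j - c 0 := by
      rw [hsum2]; ring
    rw [e1, e2]; ring
  have := hdouble.symm.trans hfull
  by_cases hd : (2 * (n : ℤ)) ∣ r
  · rw [if_pos hd] at this ⊢; linarith
  · rw [if_neg hd] at this ⊢; linarith

lemma orth (n : ℕ) (hn : 1 ≤ n)
    (haux : ∀ s : ℤ, ∑ j ∈ Finset.range (n + 1),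
      (if j = 0 ∨ j = n then (1 : ℝ) / 2 else 1) * Real.cos (s * j * π / n) =
      if (2 * (n : ℤ)) ∣ s then (n : ℝ) else 0)
    (r k : ℕ) :
    (2 / (n : ℝ)) * ∑ j ∈ Finset.range (n + 1),
      (if j = 0 ∨ j = n then (1 : ℝ) / 2 else 1) *
        (Real.cos (r * j * π / n) * Real.cos (k * j * π / n)) =
      (if (2 * (n : ℤ)) ∣ ((r : ℤ) + k) then (1 : ℝ) else 0) +
      (if (2 * (n : ℤ)) ∣ ((r : ℤ) - k) then (1 : ℝ) else 0) := by
  have hn0 : (n : ℝ) ≠ 0 := Nat.cast_ne_zero.mpr (by omega)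
  have hprod : ∀ x y : ℝ, Real.cos x * Real.cos y =
      (Real.cos (x + y) + Real.cos (x - y)) / 2 := by
    intro x y; rw [Real.cos_add, Real.cos_sub]; ring
  have h1 := haux ((r : ℤ) + k)
  have h2 := haux ((r : ℤ) - k)
  push_cast at h1 h2
  have key : ∑ j ∈ Finset.range (n + 1),
      (if j = 0 ∨ j = n then (1 : ℝ) / 2 else 1) *
        (Real.cos (r * j * π / n) * Real.cos (k * j * π / n)) =
      ((∑ j ∈ Finset.range (n + 1), (if j = 0 ∨ j = n then (1 : ℝ) / 2 else 1) *
          Real.cos (((r : ℝ) + (k : ℝ)) * j * π / n)) +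
       (∑ j ∈ Finset.range (n + 1), (if j = 0 ∨ j = n then (1 : ℝ) / 2 else 1) *
          Real.cos (((r : ℝ) - (k : ℝ)) * j * π / n))) / 2 := by
    rw [← Finset.sum_add_distrib, Finset.sum_div]
    apply Finset.sum_congr rfl
    intro j _
    have hC : ((r : ℝ) + (k : ℝ)) * j * π / n =
        (r : ℝ) * j * π / n + (k : ℝ) * j * π / n := by ring
    have hD : ((r : ℝ) - (k : ℝ)) * j * π / n =
        (r : ℝ) * j * π / n - (k : ℝ) * j * π / n := by ring
    rw [hC, hD, hprod]
    ring
  rw [key, h1, h2]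
  by_cases hd1 : (2 * (n : ℤ)) ∣ ((r : ℤ) + k) <;>
    by_cases hd2 : (2 * (n : ℤ)) ∣ ((r : ℤ) - k) <;>
      simp [hd1, hd2, show n ≠ 0 by omega] <;> field_simp <;> norm_num

lemma le_prod (n k ℓ : ℕ) (hn : 1 ≤ n) (hk : k ≤ n) : k + 1 ≤ 2 * (ℓ + 1) * n := by
  have h1 : 2 * n ≤ 2 * (ℓ + 1) * n := Nat.mul_le_mul_right n (by omega)
  omega

lemma g1_inj (n k : ℕ) (hn : 1 ≤ n) (hk : k ≤ n) :
    Function.Injective (fun ℓ : ℕ => 2 * (ℓ + 1) * n - (k + 1)) := by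
  have : StrictMono (fun ℓ : ℕ => 2 * (ℓ + 1) * n - (k + 1)) := by
    apply strictMono_nat_of_lt_succ
    intro ℓ
    have h1 := le_prod n k ℓ hn hk
    have h2 : 2 * (ℓ + 1) * n + 2 * n = 2 * (ℓ + 1 + 1) * n := by ring
    have h3 : 1 ≤ 2 * n := by omega
    omega
  exact this.injective

lemma tsumE1 (a : ℕ → ℝ) (n k : ℕ) (hn : 1 ≤ n) (hk : k ≤ n) :
    ∑' m : ℕ, (if (2 * (n : ℤ)) ∣ ((m : ℤ) + 1 + k) then a (m + 1) else 0) =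
      ∑' ℓ : ℕ, a (2 * (ℓ + 1) * n - k) := by
  set F : ℕ → ℝ := fun m => if (2 * (n : ℤ)) ∣ ((m : ℤ) + 1 + k) then a (m + 1) else 0 with hF
  set g : ℕ → ℕ := fun ℓ => 2 * (ℓ + 1) * n - (k + 1) with hg
  have hsupp : Function.support F ⊆ Set.range g := by
    intro m hm
    have hcond : (2 * (n : ℤ)) ∣ ((m : ℤ) + 1 + k) := by
      by_contra h
      apply hm
      rw [hF]; simp only [if_neg h]
    obtain ⟨t, ht⟩ := hcond
    have hm0 : (0 : ℤ) ≤ (m : ℤ) := Int.natCast_nonneg m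
    have hk0 : (0 : ℤ) ≤ (k : ℤ) := Int.natCast_nonneg k
    have ht1 : 1 ≤ t := by
      by_contra h
      push_neg at h
      have h0 : t ≤ 0 := by omega
      have : 2 * (n : ℤ) * t ≤ 0 :=
        mul_nonpos_of_nonneg_of_nonpos (by positivity) h0
      linarith
    set s := t.toNat with hs
    have hst : (s : ℤ) = t := Int.toNat_of_nonneg (by omega)
    have hnat : m + 1 + k = 2 * n * s := by
      have : ((m : ℤ) + 1 + k) = 2 * (n : ℤ) * s := by rw [hst]; exact ht
      exact_mod_cast this
    have hs1 : 1 ≤ s := by omega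
    refine ⟨s - 1, ?_⟩
    have h3 : 2 * ((s - 1) + 1) * n = 2 * n * s := by
      rw [show (s - 1) + 1 = s by omega]; ring
    show 2 * ((s - 1) + 1) * n - (k + 1) = m
    rw [h3]
    omega
  have := (g1_inj n k hn hk).tsum_eq (f := F) hsupp
  rw [← this]
  apply tsum_congr
  intro ℓ
  have h1 := le_prod n k ℓ hn hk
  have hgval : g ℓ + 1 = 2 * (ℓ + 1) * n - k := by simp only [hg]; omega
  have hcond : (2 * (n : ℤ)) ∣ ((g ℓ : ℤ) + 1 + k) := by
    refine ⟨ℓ + 1, ?_⟩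
    have : (g ℓ : ℤ) = 2 * (ℓ + 1) * n - (k + 1) := by
      simp only [hg]
      rw [Nat.cast_sub h1]
      push_cast
      ring
    rw [this]; push_cast; ring
  show F (g ℓ) = _
  rw [hF]
  simp only [if_pos hcond, hgval]

lemma g2_inj (n k : ℕ) (hn : 1 ≤ n) :
    Function.Injective (fun ℓ : ℕ => (k - 1) + 2 * ℓ * n) := by
  have : StrictMono (fun ℓ : ℕ => (k - 1) + 2 * ℓ * n) := by
    apply strictMono_nat_of_lt_succ
    intro ℓ
    have h2 : 2 * ℓ * n + 2 * n = 2 * (ℓ + 1) * n := by ring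
    omega
  exact this.injective

lemma tsumE2 (a : ℕ → ℝ) (ha : Summable fun k => |a k|) (n k : ℕ) (hn : 1 ≤ n)
    (hk : k ≤ n) (hk1 : 1 ≤ k) :
    ∑' m : ℕ, (if (2 * (n : ℤ)) ∣ ((m : ℤ) + 1 - k) then a (m + 1) else 0) =
      a k + ∑' ℓ : ℕ, a (2 * (ℓ + 1) * n + k) := by
  set F : ℕ → ℝ := fun m => if (2 * (n : ℤ)) ∣ ((m : ℤ) + 1 - k) then a (m + 1) else 0 with hF
  set g : ℕ → ℕ := fun ℓ => (k - 1) + 2 * ℓ * n with hg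
  have hsupp : Function.support F ⊆ Set.range g := by
    intro m hm
    have hcond : (2 * (n : ℤ)) ∣ ((m : ℤ) + 1 - k) := by
      by_contra h
      apply hm
      rw [hF]; simp only [if_neg h]
    obtain ⟨t, ht⟩ := hcond
    have hm0 : (0 : ℤ) ≤ (m : ℤ) := Int.natCast_nonneg m
    have hkn : (k : ℤ) ≤ (n : ℤ) := by exact_mod_cast hk
    have hn1 : (1 : ℤ) ≤ (n : ℤ) := by exact_mod_cast hn
    have ht0 : 0 ≤ t := by
      by_contra h
      push_neg at h
      have h0 : t ≤ -1 := by omega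
      have : 2 * (n : ℤ) * t ≤ 2 * (n : ℤ) * (-1) := by
        apply mul_le_mul_of_nonneg_left h0 (by positivity)
      linarith
    set s := t.toNat with hs
    have hst : (s : ℤ) = t := Int.toNat_of_nonneg ht0
    have hnat : m + 1 = k + 2 * n * s := by
      have : (m : ℤ) + 1 = (k : ℤ) + 2 * (n : ℤ) * s := by rw [hst]; linarith [ht]
      exact_mod_cast this
    refine ⟨s, ?_⟩
    show (k - 1) + 2 * s * n = m
    have h3 : 2 * s * n = 2 * n * s := by ring
    rw [h3]
    omega
  have := (g2_inj n k hn).tsum_eq (f := F) hsupp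
  rw [← this]
  have hterm : ∀ ℓ : ℕ, F (g ℓ) = a (k + 2 * ℓ * n) := by
    intro ℓ
    have hgval : g ℓ + 1 = k + 2 * ℓ * n := by simp only [hg]; omega
    have hcond : (2 * (n : ℤ)) ∣ ((g ℓ : ℤ) + 1 - k) := by
      refine ⟨ℓ, ?_⟩
      have : ((g ℓ : ℕ) : ℤ) + 1 = (k : ℤ) + 2 * ℓ * n := by exact_mod_cast congrArg (Nat.cast : ℕ → ℤ) hgval
      rw [this]; push_cast; ring
    rw [hF]
    simp only [if_pos hcond, hgval]
  rw [tsum_congr hterm]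
  have hsummable : Summable (fun ℓ : ℕ => a (k + 2 * ℓ * n)) := by
    have : (fun ℓ : ℕ => a (k + 2 * ℓ * n)) = a ∘ (fun ℓ : ℕ => k + 2 * ℓ * n) := rfl
    rw [this]
    apply ha.of_abs.comp_injective
    have : StrictMono (fun ℓ : ℕ => k + 2 * ℓ * n) := by
      apply strictMono_nat_of_lt_succ
      intro ℓ
      have h2 : 2 * ℓ * n + 2 * n = 2 * (ℓ + 1) * n := by ring
      omega
    exact this.injective
  rw [Summable.tsum_eq_zero_add hsummable]
  have h0 : k + 2 * 0 * n = k := by ring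
  rw [h0]
  congr 1
  apply tsum_congr
  intro ℓ
  congr 1
  ring

end AliasingAux

/-- Aliasing formula for interpolation at Chebyshev points of the second kind:
if `f(x) = a₀/2 + ∑_{k≥1} a_k T_k(x)` with `∑ |a_k| < ∞`, and
`c_k = (2/n) ∑''_{j=0}^n f(x_j) T_k(x_j)` (first and last terms halved) with
`x_j = cos(jπ/n)`, then `c_k = a_k + ∑_{ℓ=1}^∞ (a_{2ℓn-k} + a_{2ℓn+k})` for `k ≤ n`. -/
theorem chebyshev_interp_second_kind_aliasing (f : ℝ → ℝ) (a : ℕ → ℝ) (n : ℕ)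
    (hn : 1 ≤ n) (ha : Summable fun k => |a k|)
    (hf : ∀ x ∈ Set.Icc (-1 : ℝ) 1,
      f x = a 0 / 2 + ∑' k : ℕ, a (k + 1) * (Polynomial.Chebyshev.T ℝ (k + 1)).eval x) :
    ∀ k ≤ n,
      (2 / (n : ℝ)) * ∑ j ∈ Finset.range (n + 1),
          (if j = 0 ∨ j = n then (1 : ℝ) / 2 else 1) *
            (f (Real.cos (j * π / n)) *
              (Polynomial.Chebyshev.T ℝ k).eval (Real.cos (j * π / n))) =
        a k + ∑' ℓ : ℕ, (a (2 * (ℓ + 1) * n - k) + a (2 * (ℓ + 1) * n + k)) := by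
  intro k hk
  have hn0 : (n : ℝ) ≠ 0 := Nat.cast_ne_zero.mpr (by omega)
  have haux : ∀ s : ℤ, ∑ j ∈ Finset.range (n + 1),
      (if j = 0 ∨ j = n then (1 : ℝ) / 2 else 1) * Real.cos (s * j * π / n) =
      if (2 * (n : ℤ)) ∣ s then (n : ℝ) else 0 :=
    fun s => sum_cos_wt n hn s (sum_cos_full n hn s)
  have hsa : Summable (fun m : ℕ => |a (m + 1)|) :=
    ha.comp_injective (fun x y h => by omega)
  -- step 1: rewrite f and T at the nodes
  have hfT : ∀ j : ℕ,
      f (Real.cos (j * π / n)) *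
        (Polynomial.Chebyshev.T ℝ (k : ℤ)).eval (Real.cos (j * π / n)) =
      (a 0 / 2) * (Real.cos (((0 : ℕ) : ℝ) * j * π / n) * Real.cos ((k : ℝ) * j * π / n)) +
        ∑' m : ℕ, a (m + 1) *
          (Real.cos (((m + 1 : ℕ) : ℝ) * j * π / n) * Real.cos ((k : ℝ) * j * π / n)) := by
    intro j
    have hmem : Real.cos (j * π / n) ∈ Set.Icc (-1 : ℝ) 1 :=
      ⟨Real.neg_one_le_cos _, Real.cos_le_one _⟩
    have hT : ∀ r : ℤ, (Polynomial.Chebyshev.T ℝ r).eval (Real.cos ((j : ℝ) * π / n)) =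
        Real.cos ((r : ℝ) * j * π / n) := by
      intro r
      rw [Polynomial.Chebyshev.T_real_cos]
      congr 1
      ring
    rw [hf _ hmem, hT (k : ℤ)]
    rw [add_mul, ← tsum_mul_right]
    congr 1
    · norm_num
    · apply tsum_congr
      intro m
      rw [hT ((m : ℤ) + 1)]
      push_cast
      ring
  -- weight bound
  have hWb : ∀ j : ℕ, |if j = 0 ∨ j = n then (1 : ℝ) / 2 else 1| ≤ 1 := by
    intro j; rw [abs_le]; split_ifs <;> constructor <;> norm_num
  have habs : ∀ (m j : ℕ),
      ‖a (m + 1) * ((if j = 0 ∨ j = n then (1 : ℝ) / 2 else 1) *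
        (Real.cos (((m + 1 : ℕ) : ℝ) * j * π / n) * Real.cos ((k : ℝ) * j * π / n)))‖ ≤
      |a (m + 1)| := by
    intro m j
    rw [Real.norm_eq_abs, abs_mul]
    have h1 : |(if j = 0 ∨ j = n then (1 : ℝ) / 2 else 1) *
        (Real.cos (((m + 1 : ℕ) : ℝ) * j * π / n) * Real.cos ((k : ℝ) * j * π / n))| ≤ 1 := by
      rw [abs_mul, abs_mul]
      have h2 := Real.abs_cos_le_one (((m + 1 : ℕ) : ℝ) * j * π / n)
      have h3 := Real.abs_cos_le_one ((k : ℝ) * j * π / n)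
      have h4 := hWb j
      exact mul_le_one₀ h4 (by positivity) (mul_le_one₀ h2 (abs_nonneg _) h3)
    calc |a (m + 1)| * |_| ≤ |a (m + 1)| * 1 :=
          mul_le_mul_of_nonneg_left h1 (abs_nonneg _)
      _ = |a (m + 1)| := mul_one _
  have hsummG : ∀ j : ℕ, Summable (fun m : ℕ => a (m + 1) *
      ((if j = 0 ∨ j = n then (1 : ℝ) / 2 else 1) *
        (Real.cos (((m + 1 : ℕ) : ℝ) * j * π / n) * Real.cos ((k : ℝ) * j * π / n)))) := by
    intro j
    exact Summable.of_norm_bounded hsa (fun m => habs m j)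
  -- per-node expansion with weights
  have hterm : ∀ j ∈ Finset.range (n + 1),
      (if j = 0 ∨ j = n then (1 : ℝ) / 2 else 1) *
        (f (Real.cos (j * π / n)) *
          (Polynomial.Chebyshev.T ℝ (k : ℤ)).eval (Real.cos (j * π / n))) =
      (a 0 / 2) * ((if j = 0 ∨ j = n then (1 : ℝ) / 2 else 1) *
          (Real.cos (((0 : ℕ) : ℝ) * j * π / n) * Real.cos ((k : ℝ) * j * π / n))) +
        ∑' m : ℕ, a (m + 1) * ((if j = 0 ∨ j = n then (1 : ℝ) / 2 else 1) *
          (Real.cos (((m + 1 : ℕ) : ℝ) * j * π / n) * Real.cos ((k : ℝ) * j * π / n))) := by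
    intro j _
    rw [hfT j, mul_add, ← tsum_mul_left]
    congr 1
    · ring
    · apply tsum_congr
      intro m
      ring
  -- sum over nodes, swap
  have hswap : ∑ j ∈ Finset.range (n + 1),
      (if j = 0 ∨ j = n then (1 : ℝ) / 2 else 1) *
        (f (Real.cos (j * π / n)) *
          (Polynomial.Chebyshev.T ℝ (k : ℤ)).eval (Real.cos (j * π / n))) =
      (a 0 / 2) * (∑ j ∈ Finset.range (n + 1),
          (if j = 0 ∨ j = n then (1 : ℝ) / 2 else 1) *
          (Real.cos (((0 : ℕ) : ℝ) * j * π / n) * Real.cos ((k : ℝ) * j * π / n))) +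
        ∑' m : ℕ, a (m + 1) * (∑ j ∈ Finset.range (n + 1),
          (if j = 0 ∨ j = n then (1 : ℝ) / 2 else 1) *
          (Real.cos (((m + 1 : ℕ) : ℝ) * j * π / n) * Real.cos ((k : ℝ) * j * π / n))) := by
    rw [Finset.sum_congr rfl hterm, Finset.sum_add_distrib]
    congr 1
    · rw [Finset.mul_sum]
    · rw [← Summable.tsum_finsetSum (fun j _ => hsummG j)]
      apply tsum_congr
      intro m
      rw [Finset.mul_sum]
  -- orthogonality applied
  have horth := orth n hn haux
  -- summability of the indicator-truncated sequences
  have hsF1 : Summable (fun m : ℕ =>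
      if (2 * (n : ℤ)) ∣ ((m : ℤ) + 1 + k) then a (m + 1) else 0) := by
    apply Summable.of_norm_bounded hsa
    intro m
    rw [Real.norm_eq_abs]
    split_ifs <;> simp [abs_nonneg]
  have hsF2 : Summable (fun m : ℕ =>
      if (2 * (n : ℤ)) ∣ ((m : ℤ) + 1 - k) then a (m + 1) else 0) := by
    apply Summable.of_norm_bounded hsa
    intro m
    rw [Real.norm_eq_abs]
    split_ifs <;> simp [abs_nonneg]
  -- evaluate the k-th coefficient sum
  rw [hswap, mul_add, mul_left_comm, horth 0 k]
  rw [← tsum_mul_left]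
  have hterm2 : ∀ m : ℕ, (2 / (n : ℝ)) * (a (m + 1) * (∑ j ∈ Finset.range (n + 1),
      (if j = 0 ∨ j = n then (1 : ℝ) / 2 else 1) *
      (Real.cos (((m + 1 : ℕ) : ℝ) * j * π / n) * Real.cos ((k : ℝ) * j * π / n)))) =
      (if (2 * (n : ℤ)) ∣ ((m : ℤ) + 1 + k) then a (m + 1) else 0) +
      (if (2 * (n : ℤ)) ∣ ((m : ℤ) + 1 - k) then a (m + 1) else 0) := by
    intro m
    rw [mul_left_comm, horth (m + 1) k]
    have hc1 : (((m + 1 : ℕ) : ℤ) + (k : ℤ)) = ((m : ℤ) + 1 + (k : ℤ)) := by push_cast; ring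
    have hc2 : (((m + 1 : ℕ) : ℤ) - (k : ℤ)) = ((m : ℤ) + 1 - (k : ℤ)) := by push_cast; ring
    rw [hc1, hc2, mul_add, mul_ite, mul_one, mul_zero, mul_ite, mul_one, mul_zero]
  rw [tsum_congr hterm2, Summable.tsum_add hsF1 hsF2]
  rw [tsumE1 a n k hn hk]
  have hS1 : Summable (fun ℓ : ℕ => a (2 * (ℓ + 1) * n - k)) := by
    apply ha.of_abs.comp_injective
    have hm : StrictMono (fun ℓ : ℕ => 2 * (ℓ + 1) * n - k) := by
      apply strictMono_nat_of_lt_succ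
      intro ℓ
      have h1 := le_prod n k ℓ hn hk
      have h2 := le_prod n k (ℓ + 1) hn hk
      have h3 : 2 * (ℓ + 1) * n + 2 * n = 2 * (ℓ + 1 + 1) * n := by ring
      omega
    exact hm.injective
  have hS2 : Summable (fun ℓ : ℕ => a (2 * (ℓ + 1) * n + k)) := by
    apply ha.of_abs.comp_injective
    have hm : StrictMono (fun ℓ : ℕ => 2 * (ℓ + 1) * n + k) := by
      apply strictMono_nat_of_lt_succ
      intro ℓ
      have h3 : 2 * (ℓ + 1) * n + 2 * n = 2 * (ℓ + 1 + 1) * n := by ring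
      have h4 : 1 ≤ 2 * n := by omega
      omega
    exact hm.injective
  have hzval : a 0 / 2 * ((if (2 * (n : ℤ)) ∣ (((0 : ℕ) : ℤ) + k) then (1 : ℝ) else 0) +
      (if (2 * (n : ℤ)) ∣ (((0 : ℕ) : ℤ) - k) then (1 : ℝ) else 0)) =
      if k = 0 then a 0 else 0 := by
    by_cases hk0 : k = 0
    · subst hk0
      norm_num
    · have hkpos : (0 : ℤ) < (k : ℤ) := by exact_mod_cast Nat.pos_of_ne_zero hk0
      have hnd : ¬ (2 * (n : ℤ)) ∣ ((k : ℤ)) := by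
        intro hdvd
        have h2 := Int.le_of_dvd hkpos hdvd
        have h3 : (k : ℤ) ≤ (n : ℤ) := by exact_mod_cast hk
        have h4 : (1 : ℤ) ≤ (n : ℤ) := by exact_mod_cast hn
        omega
      have c1 : (((0 : ℕ) : ℤ) + (k : ℤ)) = (k : ℤ) := by norm_num
      have c2 : (((0 : ℕ) : ℤ) - (k : ℤ)) = -(k : ℤ) := by norm_num
      rw [c1, c2, if_neg hnd, if_neg (fun h => hnd ((dvd_neg).mp h))]
      simp [hk0]
  have hE2val : (∑' m : ℕ, if (2 * (n : ℤ)) ∣ ((m : ℤ) + 1 - k) then a (m + 1) else 0) =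
      (if k = 0 then 0 else a k) + ∑' ℓ : ℕ, a (2 * (ℓ + 1) * n + k) := by
    by_cases hk0 : k = 0
    · subst hk0
      have hzc : ∀ m : ℕ, (if (2 * (n : ℤ)) ∣ ((m : ℤ) + 1 - ((0 : ℕ) : ℤ)) then a (m + 1) else 0) =
          (if (2 * (n : ℤ)) ∣ ((m : ℤ) + 1 + ((0 : ℕ) : ℤ)) then a (m + 1) else 0) := by
        intro m; norm_num
      rw [tsum_congr hzc, tsumE1 a n 0 hn (by omega)]
      rw [if_pos rfl, zero_add]
      apply tsum_congr
      intro ℓ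
      congr 1
    · rw [tsumE2 a ha n k hn hk (by omega), if_neg hk0]
  rw [hzval, hE2val, Summable.tsum_add hS1 hS2]
  by_cases hk0 : k = 0 <;> simp [hk0] <;> ring
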